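/- arXiv:0909.0808 — 2 statements merged into one kernel-verified Lean document; each statement's English description precedes it below -/
import Mathlib

section
/- Let G = (V,E) be a finite simple graph with at least one edge, and let SG be the set of 0/1 incidence vectors in R^E of edge subsets of G contained in a cut of G. Then the vanishing ideal I(SG) is TH_1-exact (i.e., TH_1(I(SG)) = conv(SG)) if and only if G is bipartite. -/
open MvPolynomial

/-- `f` is `k`-sos mod `I`: there are polynomials `h_j` of total degree at most `k` with
`f - ∑ j, h_j ^ 2 ∈ I`. -/
def IsKSos {σ : Type*} (I : Ideal (MvPolynomial σ ℝ)) (k : ℕ) (f : MvPolynomial σ ℝ) :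
    Prop :=
  ∃ (t : ℕ) (h : Fin t → MvPolynomial σ ℝ),
    (∀ j, (h j).totalDegree ≤ k) ∧ f - ∑ j, h j ^ 2 ∈ I

/-- The `k`-th theta body of an ideal `I`: the set of points where every polynomial of
degree at most 1 that is `k`-sos mod `I` is nonnegative. -/
def thetaBody {σ : Type*} (I : Ideal (MvPolynomial σ ℝ)) (k : ℕ) : Set (σ → ℝ) :=
  {x | ∀ f : MvPolynomial σ ℝ, f.totalDegree ≤ 1 → IsKSos I k f → 0 ≤ eval x f}

/-- The set SG of 0/1 incidence vectors in `ℝ^E` of edge subsets of `G` that are contained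
in a cut of `G` (a cut being the set of edges with exactly one endpoint in some `S ⊆ V`). -/
def cutVectors {V : Type*} (G : SimpleGraph V) : Set (G.edgeSet → ℝ) :=
  {x | ∃ (F : Set G.edgeSet) (S : Set V),
    (∀ e ∈ F, ∀ a b : V, (e : Sym2 V) = s(a, b) →
      ((a ∈ S ∧ b ∉ S) ∨ (b ∈ S ∧ a ∉ S))) ∧
    x = F.indicator 1}

lemma card_support_le_sum {σ : Type*} (d : σ →₀ ℕ) :
    d.support.card ≤ d.sum fun _ e => e := by
  rw [Finset.card_eq_sum_ones, Finsupp.sum]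
  exact Finset.sum_le_sum fun i hi => Nat.one_le_iff_ne_zero.2 (Finsupp.mem_support_iff.1 hi)

lemma eval_indicator_eq {σ : Type*} [DecidableEq σ] (p : MvPolynomial σ ℝ) (F : Finset σ) :
    eval (fun i => if i ∈ F then (1:ℝ) else 0) p
      = ∑ d ∈ p.support.filter (fun d => d.support ⊆ F), p.coeff d := by
  classical
  rw [eval_eq, Finset.sum_filter]
  refine Finset.sum_congr rfl fun d _ => ?_
  by_cases h : d.support ⊆ F
  · rw [if_pos h, Finset.prod_eq_one, mul_one]
    intro i hi
    rw [if_pos (h hi), one_pow]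
  · rw [if_neg h, mul_eq_zero]
    right
    obtain ⟨i, hi, hiF⟩ := Finset.not_subset.1 h
    refine Finset.prod_eq_zero hi ?_
    rw [if_neg hiF]
    exact zero_pow (Finsupp.mem_support_iff.1 hi)

lemma quad_vanish {σ : Type*} [DecidableEq σ] {p : MvPolynomial σ ℝ} (hdeg : p.totalDegree ≤ 2)
    (hvan : ∀ F : Finset σ, F.card ≤ 2 →
      eval (fun i => if i ∈ F then (1:ℝ) else 0) p = 0)
    (F : Finset σ) : eval (fun i => if i ∈ F then (1:ℝ) else 0) p = 0 := by
  classical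
  set c : Finset σ → ℝ := fun s => ∑ d ∈ p.support.filter (fun d => d.support = s), p.coeff d
    with hc
  have hval : ∀ G : Finset σ,
      eval (fun i => if i ∈ G then (1:ℝ) else 0) p = ∑ s ∈ G.powerset, c s := by
    intro G
    rw [eval_indicator_eq]
    rw [← Finset.sum_fiberwise_of_maps_to (g := fun d : σ →₀ ℕ => d.support)
      (fun d hd => Finset.mem_powerset.2 ((Finset.mem_filter.1 hd).2)) p.coeff]
    refine Finset.sum_congr rfl fun s hs => ?_
    rw [Finset.filter_filter]
    refine Finset.sum_congr (Finset.filter_congr fun d _ => ?_) fun _ _ => rfl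
    constructor
    · exact fun h => h.2
    · exact fun h => ⟨h.trans_subset (Finset.mem_powerset.1 hs), h⟩
  have hczero : ∀ n (s : Finset σ), s.card ≤ n → c s = 0 := by
    intro n
    induction n with
    | zero =>
      intro s hs
      have : s = ∅ := Finset.card_eq_zero.1 (Nat.le_zero.1 hs)
      subst this
      have h0 := hvan ∅ (by simp)
      rw [hval ∅] at h0
      simpa using h0
    | succ n ih =>
      intro s hs
      rcases Nat.lt_or_ge s.card (n+1) with h | h
      · exact ih s (Nat.lt_succ_iff.1 h)
      have hcard : s.card = n + 1 := le_antisymm hs h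
      rcases Nat.lt_or_ge (n+1) 3 with h3 | h3
      · -- s.card ≤ 2
        have h2 : s.card ≤ 2 := by omega
        have h0 := hvan s h2
        rw [hval s] at h0
        have hsum : ∑ t ∈ s.powerset, c t
            = c s + ∑ t ∈ s.powerset.erase s, c t := by
          rw [Finset.add_sum_erase _ c (Finset.mem_powerset_self s)]
        rw [hsum] at h0
        have hrest : ∑ t ∈ s.powerset.erase s, c t = 0 := by
          refine Finset.sum_eq_zero fun t ht => ?_
          have ht' := Finset.mem_erase.1 ht
          have hsub : t ⊂ s := lt_of_le_of_ne (Finset.mem_powerset.1 ht'.2) ht'.1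
          exact ih t (by have := Finset.card_lt_card hsub; omega)
        rw [hrest, add_zero] at h0
        exact h0
      · -- s.card ≥ 3: no monomial has this support
        rw [hc]
        refine Finset.sum_eq_zero fun d hd => ?_
        exfalso
        have hd' := Finset.mem_filter.1 hd
        have h1 : d.support.card ≤ 2 :=
          le_trans (card_support_le_sum d) (le_trans (le_totalDegree hd'.1) hdeg)
        rw [hd'.2, hcard] at h1
        omega
  rw [hval F]
  exact Finset.sum_eq_zero fun s _ => hczero s.card s le_rfl

lemma single_of_sum_le_one {σ : Type*} {v : σ →₀ ℕ} (h : (v.sum fun _ e => e) ≤ 1) :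
    v = 0 ∨ ∃ i, v = Finsupp.single i 1 := by
  classical
  rcases eq_or_ne v 0 with h0 | h0
  · exact Or.inl h0
  right
  obtain ⟨i, hi⟩ := Finsupp.support_nonempty_iff.2 h0
  have hvi : 1 ≤ v i := Nat.one_le_iff_ne_zero.2 (Finsupp.mem_support_iff.1 hi)
  have hsum : v.sum (fun _ e => e) = v i + ∑ j ∈ v.support.erase i, v j := by
    rw [Finsupp.sum, Finset.add_sum_erase _ _ hi]
  have hrest : ∑ j ∈ v.support.erase i, v j = 0 ∧ v i = 1 := by
    constructor <;> omega
  refine ⟨i, Finsupp.ext fun j => ?_⟩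
  rcases eq_or_ne j i with rfl | hj
  · simpa [Finsupp.single_eq_same] using hrest.2
  · rw [Finsupp.single_eq_of_ne' (Ne.symm hj)]
    by_cases hjs : j ∈ v.support
    · exact Finset.sum_eq_zero_iff.1 hrest.1 j (Finset.mem_erase.2 ⟨hj, hjs⟩)
    · exact Finsupp.notMem_support_iff.1 hjs
lemma eval_affine {σ : Type*} {f : MvPolynomial σ ℝ} (hf : f.totalDegree ≤ 1)
    {a b : ℝ} (hab : a + b = 1) (x y : σ → ℝ) :
    eval (a • x + b • y) f = a * eval x f + b * eval y f := by
  classical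
  rw [eval_eq, eval_eq, eval_eq, Finset.mul_sum, Finset.mul_sum, ← Finset.sum_add_distrib]
  refine Finset.sum_congr rfl fun d hd => ?_
  rcases single_of_sum_le_one (le_trans (le_totalDegree hd) hf) with h0 | ⟨i, hi⟩
  · subst h0
    simp only [Finsupp.support_zero, Finset.prod_empty, mul_one]
    linear_combination (coeff 0 f) * hab.symm
  · subst hi
    rw [Finsupp.support_single_ne_zero _ one_ne_zero]
    simp only [Finset.prod_singleton, Finsupp.single_eq_same, pow_one, Pi.add_apply,
      Pi.smul_apply, smul_eq_mul]
    ring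
lemma convexHull_subset_thetaBody {σ : Type*} (S : Set (σ → ℝ)) :
    convexHull ℝ S ⊆ thetaBody (vanishingIdeal ℝ S) 1 := by
  intro x hx f hdeg hsos
  obtain ⟨t, h, hh, hmem⟩ := hsos
  have hS : S ⊆ {z | 0 ≤ eval z f} := by
    intro z hz
    have h0 : eval z (f - ∑ j, h j ^ 2) = 0 := mem_vanishingIdeal_iff.1 hmem z hz
    rw [map_sub, sub_eq_zero] at h0
    have : (0:ℝ) ≤ eval z (∑ j, h j ^ 2) := by
      rw [map_sum]
      exact Finset.sum_nonneg fun j _ => by rw [map_pow]; positivity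
    simpa [h0] using this
  have hconv : Convex ℝ {z | 0 ≤ eval z f} := by
    intro u hu v hv a b ha hb hab
    have := eval_affine hdeg hab u v
    simp only [Set.mem_setOf_eq] at hu hv ⊢
    rw [this]
    positivity
  exact convexHull_min hS hconv hx

def cross {V : Type*} (S : Set V) (u v : V) : Prop :=
  (u ∈ S ∧ v ∉ S) ∨ (v ∈ S ∧ u ∉ S)

lemma cross_of_eq {V : Type*} {S : Set V} {u v a b : V}
    (h : s(u, v) = s(a, b)) (hc : cross S u v) : cross S a b := by
  rw [Sym2.eq_iff] at h
  rcases h with ⟨rfl, rfl⟩ | ⟨rfl, rfl⟩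
  · exact hc
  · unfold cross at hc ⊢; tauto

lemma edge_rep {V : Type*} {G : SimpleGraph V} (e : G.edgeSet) :
    ∃ a b, G.Adj a b ∧ (e : Sym2 V) = s(a, b) := by
  obtain ⟨e, he⟩ := e
  induction e using Sym2.ind with
  | _ a b => exact ⟨a, b, G.mem_edgeSet.1 he, rfl⟩

lemma exists_cross_two {V : Type*} {G : SimpleGraph V} {u1 v1 u2 v2 : V}
    (h1 : G.Adj u1 v1) (h2 : G.Adj u2 v2) :
    ∃ S : Set V, cross S u1 v1 ∧ cross S u2 v2 := by
  classical
  have hne1 := h1.ne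
  have hne2 := h2.ne
  by_cases ha : u1 = u2 ∨ u1 = v2
  · refine ⟨{u1}, Or.inl ⟨rfl, ?_⟩, ?_⟩
    · simp only [Set.mem_singleton_iff]; exact fun h => hne1 h.symm
    · rcases ha with rfl | rfl
      · exact Or.inl ⟨rfl, by simp only [Set.mem_singleton_iff]; exact fun h => hne2 h.symm⟩
      · exact Or.inr ⟨rfl, by simp only [Set.mem_singleton_iff]; exact hne2⟩
  by_cases hb : v1 = u2 ∨ v1 = v2
  · refine ⟨{v1}, Or.inr ⟨rfl, ?_⟩, ?_⟩
    · simp only [Set.mem_singleton_iff]; exact hne1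
    · rcases hb with rfl | rfl
      · exact Or.inl ⟨rfl, by simp only [Set.mem_singleton_iff]; exact fun h => hne2 h.symm⟩
      · exact Or.inr ⟨rfl, by simp only [Set.mem_singleton_iff]; exact hne2⟩
  push_neg at ha hb
  refine ⟨{u1, u2}, Or.inl ⟨Or.inl rfl, ?_⟩, Or.inl ⟨Or.inr rfl, ?_⟩⟩
  · simp only [Set.mem_insert_iff, Set.mem_singleton_iff]
    push_neg
    exact ⟨hne1.symm, hb.1⟩
  · simp only [Set.mem_insert_iff, Set.mem_singleton_iff]
    push_neg
    exact ⟨fun h => ha.2 h.symm, hne2.symm⟩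

lemma small_mem_cutVectors {V : Type*} (G : SimpleGraph V) (F : Finset G.edgeSet)
    (hF : F.card ≤ 2) : (↑F : Set G.edgeSet).indicator 1 ∈ cutVectors G := by
  classical
  suffices h : ∃ S : Set V, ∀ e ∈ (↑F : Set G.edgeSet), ∀ a b : V,
      (e : Sym2 V) = s(a, b) → ((a ∈ S ∧ b ∉ S) ∨ (b ∈ S ∧ a ∉ S)) by
    obtain ⟨S, hS⟩ := h
    exact ⟨↑F, S, hS, rfl⟩
  interval_cases h : F.card
  · refine ⟨∅, fun e he => ?_⟩
    rw [Finset.card_eq_zero.1 h] at he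
    simp at he
  · obtain ⟨e, he⟩ := Finset.card_eq_one.1 h
    obtain ⟨a1, b1, hadj, hrep⟩ := edge_rep e
    obtain ⟨S, hS, _⟩ := exists_cross_two hadj hadj
    refine ⟨S, fun e' he' a b hab => ?_⟩
    rw [he] at he'
    simp only [Finset.coe_singleton, Set.mem_singleton_iff] at he'
    subst he'
    exact cross_of_eq (hrep ▸ hab) hS
  · obtain ⟨e, f, hef, hF2⟩ := Finset.card_eq_two.1 h
    obtain ⟨a1, b1, hadj1, hrep1⟩ := edge_rep e
    obtain ⟨a2, b2, hadj2, hrep2⟩ := edge_rep f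
    obtain ⟨S, hS1, hS2⟩ := exists_cross_two hadj1 hadj2
    refine ⟨S, fun e' he' a b hab => ?_⟩
    rw [hF2] at he'
    simp only [Finset.coe_insert, Set.mem_insert_iff, Finset.coe_singleton,
      Set.mem_singleton_iff] at he'
    rcases he' with rfl | rfl
    · exact cross_of_eq (hrep1 ▸ hab) hS1
    · exact cross_of_eq (hrep2 ▸ hab) hS2

lemma walk_parity {V : Type*} {G : SimpleGraph V} (S : Set V) :
    ∀ {u v : V} (p : G.Walk u v),
      (∀ e ∈ p.edges, ∀ a b : V, e = s(a, b) → cross S a b) →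
      ((u ∈ S ↔ v ∈ S) ↔ Even p.length) := by
  intro u v p
  induction p with
  | nil => simp
  | @cons u w v h q ih =>
    intro hcr
    have h1 : cross S u w :=
      hcr s(u, w) (by simp [SimpleGraph.Walk.edges_cons]) u w rfl
    have h2 := ih fun e he a b hab =>
      hcr e (by simp [SimpleGraph.Walk.edges_cons, he]) a b hab
    rw [SimpleGraph.Walk.length_cons, Nat.even_add_one, ← h2]
    unfold cross at h1
    tauto

lemma exists_odd_closed_walk {V : Type*} {G : SimpleGraph V}
    (h : ¬ ∃ A : Set V, ∀ u v : V, G.Adj u v → ((u ∈ A) ↔ v ∉ A)) :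
    ∃ (u : V) (p : G.Walk u u), Odd p.length := by
  classical
  by_contra hodd
  push_neg at hodd
  apply h
  refine ⟨{v | ∃ p : G.Walk (G.connectedComponentMk v).out v, Odd p.length}, fun u v huv => ?_⟩
  have hcomp : G.connectedComponentMk u = G.connectedComponentMk v :=
    SimpleGraph.ConnectedComponent.sound huv.reachable
  set r := (G.connectedComponentMk u).out with hr
  have hru : G.Reachable r u := by
    have : G.connectedComponentMk r = G.connectedComponentMk u := by
      rw [hr]
      exact (G.connectedComponentMk u).out_eq
    exact (SimpleGraph.ConnectedComponent.exact this)
  have hrv : (G.connectedComponentMk v).out = r := by rw [hcomp.symm]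
  constructor
  · rintro ⟨p, hp⟩ hv
    obtain ⟨q, hq⟩ := hv
    exact hodd r (p.append (SimpleGraph.Walk.cons huv (q.copy hrv rfl).reverse))
      (by
        rw [SimpleGraph.Walk.length_append, SimpleGraph.Walk.length_cons,
          SimpleGraph.Walk.length_reverse, SimpleGraph.Walk.length_copy]
        obtain ⟨k, hk⟩ := hp
        obtain ⟨l, hl⟩ := hq
        exact ⟨k + l + 1, by omega⟩)
  · intro hv
    have w := hru.some
    rcases Nat.even_or_odd w.length with hev | hod
    · exfalso
      apply hv
      refine ⟨(w.append (SimpleGraph.Walk.cons huv SimpleGraph.Walk.nil)).copy hrv.symm rfl, ?_⟩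
      rw [SimpleGraph.Walk.length_copy, SimpleGraph.Walk.length_append,
        SimpleGraph.Walk.length_cons, SimpleGraph.Walk.length_nil]
      obtain ⟨k, hk⟩ := hev
      exact ⟨k, by omega⟩
    · exact ⟨w, hod⟩

lemma zeroOne_mem_thetaBody {V : Type*} [Fintype V] (G : SimpleGraph V) (x : G.edgeSet → ℝ)
    (hx : ∀ e, x e = 0 ∨ x e = 1) :
    x ∈ thetaBody (vanishingIdeal ℝ (cutVectors G)) 1 := by
  classical
  rintro f hdeg ⟨t, h, hh, hmem⟩
  have hpd : (f - ∑ j, h j ^ 2).totalDegree ≤ 2 := by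
    rw [sub_eq_add_neg]
    refine le_trans (totalDegree_add _ _) (max_le (le_trans hdeg one_le_two) ?_)
    rw [totalDegree_neg]
    refine le_trans (totalDegree_finset_sum _ _) (Finset.sup_le fun j _ => ?_)
    refine le_trans (totalDegree_pow _ _) ?_
    have := hh j
    omega
  have hvan : ∀ F : Finset G.edgeSet, F.card ≤ 2 →
      eval (fun i => if i ∈ F then (1:ℝ) else 0) (f - ∑ j, h j ^ 2) = 0 := by
    intro F hF
    have hmem2 := mem_vanishingIdeal_iff.1 hmem _ (small_mem_cutVectors G F hF)
    have hfun : (fun i => if i ∈ F then (1:ℝ) else 0) = (↑F : Set G.edgeSet).indicator 1 := by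
      funext i
      rw [Set.indicator_apply]
      simp
    rw [hfun]
    exact hmem2
  have hFx : x = fun i => if i ∈ (Set.toFinite {e | x e = 1}).toFinset then (1:ℝ) else 0 := by
    funext e
    rcases hx e with h0 | h1
    · rw [if_neg, h0]
      simp only [Set.Finite.mem_toFinset, Set.mem_setOf_eq, h0]
      norm_num
    · rw [if_pos, h1]
      simp only [Set.Finite.mem_toFinset, Set.mem_setOf_eq, h1]
  have h0 : eval x (f - ∑ j, h j ^ 2) = 0 := by
    rw [hFx]; exact quad_vanish hpd hvan _
  rw [map_sub, sub_eq_zero] at h0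
  rw [h0, map_sum]
  exact Finset.sum_nonneg fun j _ => by rw [map_pow]; positivity

lemma indicator_not_mem_hull {V : Type*} [Fintype V] {G : SimpleGraph V} {u : V}
    (p : G.Walk u u) (hodd : Odd p.length) :
    (Set.indicator {e : G.edgeSet | ↑e ∈ p.edges} 1 : G.edgeSet → ℝ) ∉
      convexHull ℝ (cutVectors G) := by
  classical
  set F0 : Set G.edgeSet := {e | ↑e ∈ p.edges} with hF0
  set Fs : Finset G.edgeSet := (Set.toFinite F0).toFinset with hFs
  set c : ℝ := (Fs.card : ℝ) - 1 with hcdef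
  have hH : Convex ℝ {y : G.edgeSet → ℝ | ∑ e ∈ Fs, y e ≤ c} := by
    intro y hy z hz a b ha hb hab
    simp only [Set.mem_setOf_eq] at hy hz ⊢
    have heq : ∑ e ∈ Fs, (a • y + b • z) e = a * ∑ e ∈ Fs, y e + b * ∑ e ∈ Fs, z e := by
      simp only [Pi.add_apply, Pi.smul_apply, smul_eq_mul]
      rw [Finset.sum_add_distrib, Finset.mul_sum, Finset.mul_sum]
    rw [heq]
    calc a * ∑ e ∈ Fs, y e + b * ∑ e ∈ Fs, z e ≤ a * c + b * c := by
          apply add_le_add <;> apply mul_le_mul_of_nonneg_left <;> assumption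
    _ = c := by rw [← add_mul, hab, one_mul]
  have hSH : cutVectors G ⊆ {y : G.edgeSet → ℝ | ∑ e ∈ Fs, y e ≤ c} := by
    rintro y ⟨F, S, hS, rfl⟩
    simp only [Set.mem_setOf_eq]
    by_cases hall : ∀ e ∈ Fs, e ∈ F
    · exfalso
      have hcr : ∀ e ∈ p.edges, ∀ a b : V, e = s(a, b) → cross S a b := by
        intro ed hed a b hab
        have he : ed ∈ G.edgeSet := p.edges_subset_edgeSet hed
        have hmem : (⟨ed, he⟩ : G.edgeSet) ∈ Fs := by
          rw [hFs, Set.Finite.mem_toFinset]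
          exact hed
        exact hS _ (hall _ hmem) a b hab
      have := (walk_parity S p hcr).1 Iff.rfl
      exact Nat.not_even_iff_odd.2 hodd this
    · push_neg at hall
      obtain ⟨e0, he0, he0F⟩ := hall
      have hcard1 : 1 ≤ Fs.card := Finset.card_pos.2 ⟨e0, he0⟩
      rw [← Finset.add_sum_erase _ _ he0]
      have h1 : F.indicator (1 : G.edgeSet → ℝ) e0 = 0 := Set.indicator_of_notMem he0F 1
      have h2 : ∑ e ∈ Fs.erase e0, F.indicator (1 : G.edgeSet → ℝ) e
          ≤ ((Fs.erase e0).card : ℝ) * 1 := by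
        rw [← nsmul_eq_mul]
        refine Finset.sum_le_card_nsmul _ _ _ fun e _ => ?_
        by_cases he : e ∈ F
        · rw [Set.indicator_of_mem he, Pi.one_apply]
        · rw [Set.indicator_of_notMem he]
          norm_num
      rw [h1, zero_add, hcdef]
      refine le_trans h2 ?_
      rw [Finset.card_erase_of_mem he0, mul_one, Nat.cast_sub hcard1]
      norm_num
  intro hmem
  have hle := convexHull_min hSH hH hmem
  simp only [Set.mem_setOf_eq] at hle
  have hsum : ∑ e ∈ Fs, Set.indicator F0 1 e = (Fs.card : ℝ) := by
    rw [Finset.sum_congr rfl fun e he => ?_, Finset.sum_const, nsmul_eq_mul, mul_one]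
    rw [Set.indicator_of_mem (by rw [hFs, Set.Finite.mem_toFinset] at he; exact he), Pi.one_apply]
  rw [hsum, hcdef] at hle
  linarith

/-- Let G = (V,E) be a finite simple graph with at least one edge, and SG
the set of 0/1 incidence vectors in ℝ^E of edge subsets contained in a cut of G. Then
I(SG) is TH_1-exact, i.e. TH_1(I(SG)) = conv(SG), if and only if G is bipartite. -/
theorem stmt_16 {V : Type*} [Fintype V] (G : SimpleGraph V) (hE : G.edgeSet.Nonempty) :
    thetaBody (vanishingIdeal ℝ (cutVectors G)) 1 = convexHull ℝ (cutVectors G) ↔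
    ∃ A : Set V, ∀ u v : V, G.Adj u v → ((u ∈ A) ↔ v ∉ A) := by
  classical
  constructor
  · intro heq
    by_contra hA
    obtain ⟨u, p, hodd⟩ := exists_odd_closed_walk hA
    have hz : (Set.indicator {e : G.edgeSet | ↑e ∈ p.edges} 1 : G.edgeSet → ℝ) ∈
        thetaBody (vanishingIdeal ℝ (cutVectors G)) 1 := by
      refine zeroOne_mem_thetaBody G _ fun e => ?_
      by_cases he : e ∈ {e : G.edgeSet | ↑e ∈ p.edges}
      · right; rw [Set.indicator_of_mem he, Pi.one_apply]
      · left; rw [Set.indicator_of_notMem he]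
    rw [heq] at hz
    exact indicator_not_mem_hull p hodd hz
  · rintro ⟨A, hA⟩
    refine Set.Subset.antisymm ?_ (convexHull_subset_thetaBody _)
    intro x hx
    have hbound : ∀ e : G.edgeSet, 0 ≤ x e ∧ x e ≤ 1 := by
      intro e
      have hiX : (X e : MvPolynomial G.edgeSet ℝ).totalDegree ≤ 1 :=
        le_of_eq (totalDegree_X e)
      have hvan1 : (X e : MvPolynomial G.edgeSet ℝ) - ∑ _j : Fin 1, (X e) ^ 2 ∈
          vanishingIdeal ℝ (cutVectors G) := by
        rw [mem_vanishingIdeal_iff]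
        rintro z ⟨F, S, hS, rfl⟩
        rw [Fin.sum_univ_one, map_sub, map_pow, aeval_X]
        by_cases he : e ∈ F
        · rw [Set.indicator_of_mem he, Pi.one_apply]; ring
        · rw [Set.indicator_of_notMem he]; ring
      have h1 := hx (X e) hiX ⟨1, fun _ => X e, fun _ => hiX, hvan1⟩
      rw [eval_X] at h1
      have hi2 : (1 - X e : MvPolynomial G.edgeSet ℝ).totalDegree ≤ 1 := by
        rw [sub_eq_add_neg]
        refine le_trans (totalDegree_add _ _) (max_le ?_ ?_)
        · rw [totalDegree_one]; omega
        · rw [totalDegree_neg, totalDegree_X]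
      have hvan2 : (1 - X e : MvPolynomial G.edgeSet ℝ) - ∑ _j : Fin 1, (1 - X e) ^ 2 ∈
          vanishingIdeal ℝ (cutVectors G) := by
        rw [mem_vanishingIdeal_iff]
        rintro z ⟨F, S, hS, rfl⟩
        rw [Fin.sum_univ_one, map_sub, map_pow, map_sub, map_one, aeval_X]
        by_cases he : e ∈ F
        · rw [Set.indicator_of_mem he, Pi.one_apply]; ring
        · rw [Set.indicator_of_notMem he]; ring
      have h2 := hx (1 - X e) hi2 ⟨1, fun _ => 1 - X e, fun _ => hi2, hvan2⟩
      rw [map_sub, map_one, eval_X] at h2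
      exact ⟨h1, by linarith⟩
    have hxhull : x ∈ convexHull ℝ (Set.pi Set.univ fun _ : G.edgeSet => ({0, 1} : Set ℝ)) := by
      refine mem_convexHull_pi fun i _ => ?_
      rw [convexHull_pair, segment_eq_Icc zero_le_one]
      exact ⟨(hbound i).1, (hbound i).2⟩
    refine convexHull_mono ?_ hxhull
    intro y hy
    refine ⟨{e | y e = 1}, A, ?_, ?_⟩
    · intro e he a b hab
      have hadj : G.Adj a b := G.mem_edgeSet.1 (hab ▸ e.2)
      have hiff := hA a b hadj
      by_cases haA : a ∈ A
      · exact Or.inl ⟨haA, hiff.1 haA⟩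
      · refine Or.inr ⟨?_, haA⟩
        by_contra hbA
        exact haA (hiff.2 hbA)
    · funext e
      have hy' := hy e (Set.mem_univ e)
      simp only [Set.mem_insert_iff, Set.mem_singleton_iff] at hy'
      rcases hy' with h0 | h1
      · rw [show ({e' | y e' = 1} : Set G.edgeSet).indicator 1 e = (0:ℝ) from
          Set.indicator_of_notMem (fun hc : y e = 1 => by rw [h0] at hc; norm_num at hc) 1, h0]
      · rw [show ({e' | y e' = 1} : Set G.edgeSet).indicator 1 e = (1:ℝ) from by
          rw [Set.indicator_of_mem (show e ∈ {e' | y e' = 1} from h1), Pi.one_apply], h1]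
end

section
/- Let G = (V,E) be a finite simple graph with at least one edge, let SG be the set of 0/1 incidence vectors in R^E of edge subsets of G contained in a cut of G, and let c = max_{S subset of V} |\delta(S)| be the size of a maximum cut of G. Then the vanishing ideal I(SG) is TH_c-exact, i.e., TH_c(I(SG)) = conv(SG); in other words, the theta-rank of I(SG) is at most the size of the max-cut of G. -/
open MvPolynomial

open Finset

namespace Stmt17Aux

variable {σ : Type*}

/-- classification of exponents of degree ≤ 1 -/
lemma exp_le_one (d : σ →₀ ℕ) (hd : (d.sum fun _ n => n) ≤ 1) :
    d = 0 ∨ ∃ e, d = Finsupp.single e 1 := by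
  classical
  by_cases h : d = 0
  · exact Or.inl h
  · right
    obtain ⟨e, he⟩ := Finsupp.support_nonempty_iff.mpr h
    have h1 : 1 ≤ d e := Nat.one_le_iff_ne_zero.mpr (Finsupp.mem_support_iff.mp he)
    have hsum : ∀ s : Finset σ, s ⊆ d.support → ∑ i ∈ s, d i ≤ 1 := by
      intro s hs
      exact le_trans (Finset.sum_le_sum_of_subset hs) hd
    refine ⟨e, ?_⟩
    ext i
    rcases eq_or_ne i e with rfl | hie
    · have h2 : d i ≤ 1 := le_trans (Finset.single_le_sum (fun _ _ => Nat.zero_le _) he) hd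
      simp [le_antisymm h2 h1]
    · simp only [Finsupp.single_apply, if_neg (Ne.symm hie).symm]
      rw [if_neg (fun hh => hie (by exact hh.symm ▸ rfl))]
      by_contra hne
      have hi : i ∈ d.support := Finsupp.mem_support_iff.mpr hne
      have : d e + d i ≤ 1 := by
        have := hsum {e, i} (by intro z hz; simp at hz; rcases hz with rfl | rfl <;> assumption)
        rwa [Finset.sum_pair (fun hh => hie hh.symm)] at this
      omega

lemma eval_affine (f : MvPolynomial σ ℝ) (hf : f.totalDegree ≤ 1) (x y : σ → ℝ)
    (a b : ℝ) (hab : a + b = 1) :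
    eval (a • x + b • y) f = a * eval x f + b * eval y f := by
  classical
  conv_lhs => rw [f.as_sum]
  conv_rhs => rw [f.as_sum]
  rw [map_sum, map_sum, map_sum, Finset.mul_sum, Finset.mul_sum, ← Finset.sum_add_distrib]
  refine Finset.sum_congr rfl fun d hd => ?_
  have hd1 : (d.sum fun _ n => n) ≤ 1 := le_trans (le_totalDegree hd) hf
  rcases exp_le_one d hd1 with rfl | ⟨e, rfl⟩
  · simp only [monomial_zero', eval_C]
    linear_combination (-(coeff 0 f)) * hab
  · rw [eval_monomial, eval_monomial, eval_monomial]
    rw [Finsupp.prod_single_index (by simp), Finsupp.prod_single_index (by simp),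
      Finsupp.prod_single_index (by simp)]
    simp only [pow_one, Pi.add_apply, Pi.smul_apply, smul_eq_mul]
    ring

/-- interpolation / Möbius inversion -/
lemma mobius [DecidableEq σ] (τ : Finset σ → ℝ) (F' : Finset σ) :
    ∑ F ∈ F'.powerset, ∑ T ∈ F.powerset, (-1 : ℝ) ^ ((F \ T).card) * τ T = τ F' := by
  rw [Finset.sum_comm' (s := F'.powerset) (t := fun F => F.powerset) (t' := F'.powerset)
    (s' := fun T => F'.powerset.filter fun F => T ⊆ F) ?_]
  · have hinner : ∀ T ∈ F'.powerset,
        (∑ F ∈ F'.powerset.filter fun F => T ⊆ F, (-1 : ℝ) ^ ((F \ T).card) * τ T)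
          = (if T = F' then 1 else 0) * τ T := by
      intro T hT
      rw [Finset.mem_powerset] at hT
      rw [Finset.sum_bij' (i := fun F _ => F \ T) (j := fun W _ => W ∪ T)
        (g := fun W => (-1 : ℝ) ^ W.card * τ T) (t := (F' \ T).powerset)]
      · have : (∑ W ∈ (F' \ T).powerset, ((-1 : ℝ)) ^ W.card)
            = if F' \ T = ∅ then 1 else 0 := by
          have := Finset.sum_powerset_neg_one_pow_card (x := F' \ T)
          have hcast := congrArg (fun z : ℤ => (z : ℝ)) this
          push_cast at hcast
          convert hcast using 2 <;> simp
        rw [← Finset.sum_mul, this]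
        congr 1
        simp only [Finset.sdiff_eq_empty_iff_subset]
        by_cases h : T = F'
        · simp [h]
        · rw [if_neg h, if_neg (fun hsub => h (Finset.Subset.antisymm hT hsub))]
      · intro F hF
        simp only [Finset.mem_filter, Finset.mem_powerset] at hF
        exact Finset.mem_powerset.mpr (Finset.sdiff_subset_sdiff hF.1 le_rfl)
      · intro W hW
        simp only [Finset.mem_powerset] at hW
        simp only [Finset.mem_filter, Finset.mem_powerset]
        exact ⟨Finset.union_subset (hW.trans (Finset.sdiff_subset)) hT, Finset.subset_union_right⟩
      · intro F hF
        simp only [Finset.mem_filter] at hF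
        exact Finset.sdiff_union_of_subset hF.2
      · intro W hW
        simp only [Finset.mem_powerset] at hW
        have hdisj : Disjoint W T := Finset.disjoint_of_subset_left hW Finset.sdiff_disjoint
        rw [Finset.union_sdiff_right, Finset.sdiff_eq_self_of_disjoint hdisj]
      · intro F hF
        rfl
    rw [Finset.sum_congr rfl hinner,
      Finset.sum_eq_single_of_mem F' (Finset.mem_powerset_self F')
        (fun b _ hb => by simp [hb])]
    simp
  · intro F T
    simp only [Finset.mem_powerset, Finset.mem_filter, Finset.mem_powerset]
    constructor
    · rintro ⟨h1, h2⟩; exact ⟨⟨h1, h2⟩, h2.trans h1⟩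
    · rintro ⟨⟨h1, h2⟩, _⟩; exact ⟨h1, h2⟩

end Stmt17Aux

/-- Let G = (V,E) be a finite simple graph with at least one edge, SG the
set of 0/1 incidence vectors of edge subsets contained in a cut of G, and c the size of a
maximum cut of G. Then I(SG) is TH_c-exact, i.e. TH_c(I(SG)) = conv(SG). -/
theorem stmt_17 {V : Type*} [Fintype V] (G : SimpleGraph V) (hE : G.edgeSet.Nonempty)
    (c : ℕ)
    (hc : IsGreatest
      {m : ℕ | ∃ S : Set V,
        m = {e ∈ G.edgeSet | ∃ a b : V, e = s(a, b) ∧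
          ((a ∈ S ∧ b ∉ S) ∨ (b ∈ S ∧ a ∉ S))}.ncard} c) :
    thetaBody (vanishingIdeal ℝ (cutVectors G)) c = convexHull ℝ (cutVectors G) := by
  classical
  haveI : Fintype ↥G.edgeSet := Fintype.ofFinite _
  set SG := cutVectors G with hSGdef
  have hSGfin : SG.Finite := by
    apply Set.Finite.subset
      (Set.finite_range fun F : Set ↥G.edgeSet => F.indicator (1 : ↥G.edgeSet → ℝ))
    rintro x ⟨F, S, -, rfl⟩
    exact ⟨F, rfl⟩
  have key1 : ∀ f : MvPolynomial ↥G.edgeSet ℝ, IsKSos (vanishingIdeal ℝ SG) c f →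
      ∀ s ∈ SG, 0 ≤ eval s f := by
    rintro f ⟨t, h, hdeg, hmem⟩ s hs
    have h0 : eval s (f - ∑ j, h j ^ 2) = 0 := hmem s hs
    rw [map_sub, sub_eq_zero] at h0
    rw [h0, map_sum]
    exact Finset.sum_nonneg fun j _ => by rw [map_pow]; exact sq_nonneg _
  apply Set.Subset.antisymm
  · -- thetaBody ⊆ convexHull
    intro x hx
    by_contra hxc
    obtain ⟨L, u, hLx, hLt⟩ := geometric_hahn_banach_point_closed
      (convex_convexHull ℝ SG) (hSGfin.isClosed_convexHull (𝕜 := ℝ)) hxc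
    set p : MvPolynomial ↥G.edgeSet ℝ :=
      (∑ e : ↥G.edgeSet, C (L fun j => if e = j then (1 : ℝ) else 0) * X e) + C (-u) with hp
    have hevalp : ∀ y : ↥G.edgeSet → ℝ, eval y p = L y - u := by
      intro y
      have hy : L y = ∑ e : ↥G.edgeSet, y e * L (fun j => if e = j then (1 : ℝ) else 0) := by
        conv_lhs => rw [pi_eq_sum_univ y]
        rw [map_sum]
        refine Finset.sum_congr rfl fun e _ => ?_
        rw [map_smul, smul_eq_mul]
      rw [hp, map_add, map_sum, eval_C, hy, sub_eq_add_neg]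
      congr 1
      refine Finset.sum_congr rfl fun e _ => ?_
      rw [map_mul, eval_C, eval_X, mul_comm]
    have hpdeg : p.totalDegree ≤ 1 := by
      refine le_trans (totalDegree_add _ _) (max_le ?_ ?_)
      · refine le_trans (totalDegree_finset_sum _ _) (Finset.sup_le fun e _ => ?_)
        refine le_trans (totalDegree_mul _ _) ?_
        simp [totalDegree_C, totalDegree_X]
      · simp [totalDegree_C]
    have hpnonneg : ∀ s ∈ SG, 0 ≤ eval s p := by
      intro s hs
      rw [hevalp]
      have := hLt s (subset_convexHull ℝ SG hs)
      linarith
    -- feasible finsets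
    set Feas : Finset (Finset ↥G.edgeSet) := Finset.univ.filter
      (fun F => ∃ S : Set V, ∀ e ∈ F, ∀ a b : V, (e : Sym2 V) = s(a, b) →
        ((a ∈ S ∧ b ∉ S) ∨ (b ∈ S ∧ a ∉ S))) with hFeasdef
    have hFeas_mem : ∀ F : Finset ↥G.edgeSet, F ∈ Feas ↔
        ∃ S : Set V, ∀ e ∈ F, ∀ a b : V, (e : Sym2 V) = s(a, b) →
          ((a ∈ S ∧ b ∉ S) ∨ (b ∈ S ∧ a ∉ S)) := by
      intro F
      simp [hFeasdef]
    set indF : Finset ↥G.edgeSet → (↥G.edgeSet → ℝ) :=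
      fun F e => if e ∈ F then 1 else 0 with hindF
    have hind_mem : ∀ F ∈ Feas, indF F ∈ SG := by
      intro F hF
      obtain ⟨S, hS⟩ := (hFeas_mem F).mp hF
      refine ⟨(↑F : Set ↥G.edgeSet), S, fun e he => hS e (Finset.mem_coe.mp he), ?_⟩
      funext e
      simp [Set.indicator_apply, hindF, Finset.mem_coe]
    have hchar : ∀ x ∈ SG, ∃ F ∈ Feas, x = indF F := by
      rintro x ⟨F, S, hFS, rfl⟩
      refine ⟨(Set.toFinite F).toFinset, ?_, ?_⟩
      · exact (hFeas_mem _).mpr ⟨S, fun e he => hFS e ((Set.Finite.mem_toFinset _).mp he)⟩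
      · funext e
        simp [Set.indicator_apply, hindF, Set.Finite.mem_toFinset]
    have hcard : ∀ F ∈ Feas, F.card ≤ c := by
      intro F hF
      obtain ⟨S, hS⟩ := (hFeas_mem F).mp hF
      set CS : Set (Sym2 V) := {e ∈ G.edgeSet | ∃ a b : V, e = s(a, b) ∧
        ((a ∈ S ∧ b ∉ S) ∨ (b ∈ S ∧ a ∉ S))} with hCS
      have h1 : CS.ncard ≤ c := hc.2 ⟨S, rfl⟩
      have h2 : (↑(F.image fun e : ↥G.edgeSet => (e : Sym2 V)) : Set (Sym2 V)) ⊆ CS := by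
        intro z hz
        simp only [Finset.coe_image, Set.mem_image, Finset.mem_coe] at hz
        obtain ⟨e, he, rfl⟩ := hz
        obtain ⟨a, b, hab⟩ : ∃ a b : V, (e : Sym2 V) = s(a, b) :=
          Sym2.ind (f := fun z => ∃ a b : V, z = s(a, b)) (fun a b => ⟨a, b, rfl⟩) _
        exact ⟨e.2, a, b, hab, hS e he a b hab⟩
      calc F.card = (F.image fun e : ↥G.edgeSet => (e : Sym2 V)).card :=
            (Finset.card_image_of_injective F Subtype.val_injective).symm
        _ = (↑(F.image fun e : ↥G.edgeSet => (e : Sym2 V)) : Set (Sym2 V)).ncard :=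
            (Set.ncard_coe_finset _).symm
        _ ≤ CS.ncard := Set.ncard_le_ncard h2 (Set.toFinite CS)
        _ ≤ c := h1
    set τ : Finset ↥G.edgeSet → ℝ := fun F => Real.sqrt (eval (indF F) p) with hτ
    set g : MvPolynomial ↥G.edgeSet ℝ :=
      ∑ F ∈ Feas, C (∑ T ∈ F.powerset, (-1 : ℝ) ^ ((F \ T).card) * τ T) * ∏ e ∈ F, X e
      with hg
    have hdegg : g.totalDegree ≤ c := by
      rw [hg]
      refine le_trans (totalDegree_finset_sum _ _) (Finset.sup_le fun F hF => ?_)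
      refine le_trans (totalDegree_mul _ _) ?_
      rw [totalDegree_C, zero_add]
      refine le_trans (totalDegree_finset_prod _ _) ?_
      have : ∑ e ∈ F, (X e : MvPolynomial ↥G.edgeSet ℝ).totalDegree = F.card := by
        simp [totalDegree_X]
      rw [this]
      exact hcard F hF
    have hevalg : ∀ F' ∈ Feas, eval (indF F') g = τ F' := by
      intro F' hF'
      have hprod : ∀ F : Finset ↥G.edgeSet,
          (∏ e ∈ F, indF F' e) = if F ⊆ F' then 1 else 0 := by
        intro F
        by_cases h : F ⊆ F'
        · rw [if_pos h]
          exact Finset.prod_eq_one fun e he => by simp [hindF, h he]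
        · rw [if_neg h]
          obtain ⟨e, he, he'⟩ := Finset.not_subset.mp h
          exact Finset.prod_eq_zero he (by simp [hindF, he'])
      have hFeq : Feas.filter (fun F => F ⊆ F') = F'.powerset := by
        ext F
        simp only [Finset.mem_filter, Finset.mem_powerset]
        constructor
        · rintro ⟨-, h⟩; exact h
        · intro h
          refine ⟨?_, h⟩
          obtain ⟨S, hS⟩ := (hFeas_mem F').mp hF'
          exact (hFeas_mem F).mpr ⟨S, fun e he => hS e (h he)⟩
      rw [hg, map_sum]
      have : ∀ F ∈ Feas,
          eval (indF F') (C (∑ T ∈ F.powerset, (-1 : ℝ) ^ ((F \ T).card) * τ T) * ∏ e ∈ F, X e)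
          = if F ⊆ F' then (∑ T ∈ F.powerset, (-1 : ℝ) ^ ((F \ T).card) * τ T) else 0 := by
        intro F _
        rw [map_mul, eval_C, map_prod]
        simp only [eval_X]
        rw [hprod F]
        by_cases h : F ⊆ F' <;> simp [h]
      rw [Finset.sum_congr rfl this, ← Finset.sum_filter, hFeq]
      exact Stmt17Aux.mobius τ F'
    have hsos : IsKSos (vanishingIdeal ℝ SG) c p := by
      refine ⟨1, fun _ => g, fun j => hdegg, ?_⟩
      have hsum : ∑ j : Fin 1, (fun _ : Fin 1 => g) j ^ 2 = g ^ 2 := by simp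
      rw [hsum]
      intro x hx
      obtain ⟨F, hF, rfl⟩ := hchar x hx
      change eval (indF F) (p - g ^ 2) = 0
      rw [map_sub, map_pow, hevalg F hF, hτ]
      rw [Real.sq_sqrt (hpnonneg _ (hind_mem F hF)), sub_self]
    have := hx p hpdeg hsos
    rw [hevalp] at this
    linarith
  · -- convexHull ⊆ thetaBody
    intro x hx f hdeg hsos
    have hf0 : ∀ s ∈ SG, 0 ≤ eval s f := key1 f hsos
    have hconv : Convex ℝ {y : ↥G.edgeSet → ℝ | 0 ≤ eval y f} := by
      intro y hy z hz a b ha hb hab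
      simp only [Set.mem_setOf_eq] at hy hz ⊢
      rw [Stmt17Aux.eval_affine f hdeg y z a b hab]
      exact add_nonneg (mul_nonneg ha hy) (mul_nonneg hb hz)
    exact convexHull_min hf0 hconv hx
end
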